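/- Let (X_n, A_n)_{n∈ℕ} be measurable spaces and (κ_n : ∏_{i≤n} X_i ⇝ X_{n+1})_{n∈ℕ} Markov kernels. Let a ≤ b in ℕ, u ∈ ∏_{i≤a} X_i, and let f : ∏_{n∈ℕ} X_n → ℝ be integrable with respect to the measure ξ_a(u). Then for ξ_a(u)-almost every x, the function f is integrable with respect to ξ_b(π_b(x)), and the conditional expectation of f with respect to the σ-algebra F_b := π_b^{-1}(⊗_{i≤b} A_i) under ξ_a(u) satisfies, for ξ_a(u)-almost every x: E_{ξ_a(u)}[f | F_b](x) = ∫_{∏_{n∈ℕ} X_n} f(y) ξ_b(π_b(x), dy). -/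

import Mathlib

open MeasureTheory ProbabilityTheory Preorder Filter
open scoped ENNReal ProbabilityTheory Topology

variable {X : ℕ → Type*} [∀ n, MeasurableSpace (X n)]

/-- Canonical map gluing a trajectory up to time `b` with a point of `X (b + 1)` into a
trajectory up to time `b + 1`. -/
def IicProdSucc (b : ℕ) (p : (Π i : Finset.Iic b, X i) × X (b + 1)) :
    Π i : Finset.Iic (b + 1), X i :=
  fun i ↦ if h : i.1 ≤ b then p.1 ⟨i.1, Finset.mem_Iic.2 h⟩
    else cast (congrArg X (Nat.le_antisymm (Finset.mem_Iic.1 i.2)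
      (Nat.lt_of_not_le h))).symm p.2

/-- The partial trajectory kernel `η_{a,b}` built from the kernels `κ n`: for `b ≤ a` it is the
deterministic kernel given by the restriction map, and `η_{a,b+1}` is obtained from `η_{a,b}` by
composing with the product of the identity kernel and `κ b`. -/
noncomputable def partialTraj (κ : ∀ n, Kernel (Π i : Finset.Iic n, X i) (X (n + 1))) (a : ℕ) :
    (b : ℕ) → Kernel (Π i : Finset.Iic a, X i) (Π i : Finset.Iic b, X i)
  | 0 => Kernel.deterministic (frestrictLe₂ (Nat.zero_le a)) (measurable_frestrictLe₂ _)
  | b + 1 =>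
    if h : b + 1 ≤ a then Kernel.deterministic (frestrictLe₂ h) (measurable_frestrictLe₂ h)
    else ((Kernel.id ×ₖ κ b) ∘ₖ partialTraj κ a b).map (IicProdSucc b)

lemma measurable_IicProdSucc (b : ℕ) : Measurable (IicProdSucc (X := X) b) := by
  refine measurable_pi_lambda _ fun i ↦ ?_
  unfold IicProdSucc
  by_cases h : i.1 ≤ b
  · simp only [dif_pos h]
    exact (measurable_pi_apply _).comp measurable_fst
  · simp only [dif_neg h]
    obtain ⟨j, hj⟩ := i
    have e : j = b + 1 := Nat.le_antisymm (Finset.mem_Iic.1 hj) (Nat.lt_of_not_le h)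
    subst e
    simpa [cast_eq] using measurable_snd

instance partialTraj.instIsMarkovKernel
    (κ : ∀ n, Kernel (Π i : Finset.Iic n, X i) (X (n + 1))) [∀ n, IsMarkovKernel (κ n)]
    (a b : ℕ) : IsMarkovKernel (partialTraj κ a b) := by
  induction b with
  | zero => rw [partialTraj]; infer_instance
  | succ b ih =>
    rw [partialTraj]
    split_ifs with h
    · infer_instance
    · exact Kernel.IsMarkovKernel.map _ (measurable_IicProdSucc b)

lemma partialTraj_self (κ : ∀ n, Kernel (Π i : Finset.Iic n, X i) (X (n + 1))) (b : ℕ) :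
    partialTraj κ b b = Kernel.id := by
  cases b with
  | zero => rfl
  | succ b => rw [partialTraj, dif_pos le_rfl]; rfl

lemma partialTraj_succ_of_lt (κ : ∀ n, Kernel (Π i : Finset.Iic n, X i) (X (n + 1)))
    {a b : ℕ} (h : ¬ b + 1 ≤ a) :
    partialTraj κ a (b + 1)
      = ((Kernel.id ×ₖ κ b) ∘ₖ partialTraj κ a b).map (IicProdSucc b) := by
  rw [partialTraj, dif_neg h]

lemma partialTraj_comp (κ : ∀ n, Kernel (Π i : Finset.Iic n, X i) (X (n + 1)))
    [∀ n, IsMarkovKernel (κ n)] {a b : ℕ} (hab : a ≤ b) {c : ℕ} (hbc : b ≤ c) :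
    partialTraj κ b c ∘ₖ partialTraj κ a b = partialTraj κ a c := by
  induction c, hbc using Nat.le_induction with
  | base => rw [partialTraj_self, Kernel.id_comp]
  | succ c hbc ih =>
    rw [partialTraj_succ_of_lt κ (by omega : ¬ c + 1 ≤ b),
      partialTraj_succ_of_lt κ (by omega : ¬ c + 1 ≤ a), ← Kernel.map_comp,
      Kernel.comp_assoc, ih]

lemma comp_apply_eq_map_snd {α β γ : Type*} [MeasurableSpace α] [MeasurableSpace β]
    [MeasurableSpace γ] (η : Kernel α β) [IsSFiniteKernel η] (κ : Kernel β γ)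
    [IsSFiniteKernel κ] (a : α) :
    (κ ∘ₖ η) a = ((η a) ⊗ₘ κ).map Prod.snd := by
  ext s hs
  rw [Kernel.comp_apply' _ _ _ hs, Measure.map_apply measurable_snd hs,
    Measure.compProd_apply (measurable_snd hs)]
  rfl

lemma traj_restrict (κ : ∀ n, Kernel (Π i : Finset.Iic n, X i) (X (n + 1)))
    (ξ : ∀ n : ℕ, Kernel (Π i : Finset.Iic n, X i) (Π n, X n))
    (hchar : ∀ n b : ℕ, (ξ n).map (frestrictLe b) = partialTraj κ n b)
    (c : ℕ) (v : Π i : Finset.Iic c, X i) {S : Set (Π i : Finset.Iic c, X i)}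
    (hS : MeasurableSet S) :
    ξ c v (frestrictLe c ⁻¹' S) = Measure.dirac v S := by
  rw [← Measure.map_apply (measurable_frestrictLe c) hS,
    ← Kernel.map_apply _ (measurable_frestrictLe c), hchar c c, partialTraj_self,
    Kernel.id_apply]

lemma traj_eq (κ : ∀ n, Kernel (Π i : Finset.Iic n, X i) (X (n + 1)))
    [∀ n, IsMarkovKernel (κ n)]
    (ξ : ∀ n : ℕ, Kernel (Π i : Finset.Iic n, X i) (Π n, X n))
    (hξ : ∀ n, IsMarkovKernel (ξ n))
    (hchar : ∀ n b : ℕ, (ξ n).map (frestrictLe b) = partialTraj κ n b)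
    {a b : ℕ} (hab : a ≤ b) (u : Π i : Finset.Iic a, X i) :
    ξ a u = (ξ b ∘ₖ partialTraj κ a b) u := by
  haveI := hξ a; haveI := hξ b
  refine MeasureTheory.ext_of_generate_finite _ generateFrom_measurableCylinders.symm
    isPiSystem_measurableCylinders (fun t ht ↦ ?_) (by simp)
  obtain ⟨I, S, hS, rfl⟩ := (mem_measurableCylinders t).1 ht
  set c := max b (I.sup id) with hc
  have hbc : b ≤ c := le_max_left _ _
  have hIc : I ⊆ Finset.Iic c := fun i hi ↦ Finset.mem_Iic.2
    (le_trans (Finset.le_sup (f := id) hi) (le_max_right _ _))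
  have hrw : (cylinder I S : Set (Π n, X n))
      = frestrictLe c ⁻¹' (Finset.restrict₂ hIc ⁻¹' S) := by
    have h1 : (I.restrict : (Π n, X n) → _) = Finset.restrict₂ hIc ∘ frestrictLe c :=
      (Finset.restrict₂_comp_restrict hIc).symm
    rw [cylinder, h1, Set.preimage_comp]
  have hS' : MeasurableSet (Finset.restrict₂ (π := X) hIc ⁻¹' S) :=
    Finset.measurable_restrict₂ hIc hS
  rw [hrw, ← Measure.map_apply (measurable_frestrictLe c) hS',
    ← Measure.map_apply (measurable_frestrictLe c) hS',
    ← Kernel.map_apply _ (measurable_frestrictLe c),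
    ← Kernel.map_apply _ (measurable_frestrictLe c), hchar a c, Kernel.map_comp, hchar b c,
    partialTraj_comp κ hab hbc]

/-- Conditional expectation with respect to the trajectory kernels: for `a ≤ b`,
`u : Π i : Iic a, X i` and `f` integrable with respect to `ξ_a(u)`, for `ξ_a(u)`-almost every
`x` the function `f` is integrable with respect to `ξ_b(π_b x)` and the conditional
expectation of `f` given the σ-algebra `F_b` of events depending only on coordinates up to
`b` is `x ↦ ∫ y, f y ∂(ξ_b (π_b x))`. The trajectory kernels `ξ` are characterized by the
fact that the pushforward of `ξ_a` under each restriction map `π_b` is `η_{a,b}`. -/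
theorem condexp_traj (κ : ∀ n, Kernel (Π i : Finset.Iic n, X i) (X (n + 1)))
    [∀ n, IsMarkovKernel (κ n)]
    (ξ : ∀ n : ℕ, Kernel (Π i : Finset.Iic n, X i) (Π n, X n))
    (hξ : ∀ n, IsMarkovKernel (ξ n))
    (hchar : ∀ n b : ℕ, (ξ n).map (frestrictLe b) = partialTraj κ n b)
    {a b : ℕ} (hab : a ≤ b) (u : Π i : Finset.Iic a, X i)
    {f : (Π n, X n) → ℝ} (hf : Integrable f (ξ a u)) :
    (∀ᵐ x ∂(ξ a u), Integrable f (ξ b (frestrictLe b x))) ∧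
      (∀ᵐ x ∂(ξ a u),
        condExp (MeasurableSpace.comap (frestrictLe b) MeasurableSpace.pi) (ξ a u) f x
          = ∫ y, f y ∂(ξ b (frestrictLe b x))) := by
  haveI := hξ a; haveI := hξ b
  set μ := ξ a u with hμdef
  have hπb : Measurable (frestrictLe (π := X) b) := measurable_frestrictLe b
  set ρ := partialTraj κ a b u with hρdef
  have hρ : μ.map (frestrictLe b) = ρ := by
    rw [hμdef, ← Kernel.map_apply _ hπb, hchar a b]
  set M := ρ ⊗ₘ (ξ b) with hM
  have hμν : μ = M.map Prod.snd := by
    rw [hμdef, traj_eq κ ξ hξ hchar hab u, comp_apply_eq_map_snd]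
  -- a strongly measurable representative of f
  obtain ⟨f', hf'sm, hff'⟩ : ∃ f', StronglyMeasurable f' ∧ f =ᵐ[μ] f' :=
    ⟨hf.1.mk f, hf.1.stronglyMeasurable_mk, hf.1.ae_eq_mk⟩
  have hf' : Integrable f' μ := hf.congr hff'
  have hf'M : Integrable (fun p ↦ f' p.2) M := by
    rw [hμν] at hf'
    exact (integrable_map_measure hf'sm.aestronglyMeasurable
      measurable_snd.aemeasurable).1 hf'
  have hf'Msm : AEStronglyMeasurable (fun p ↦ f' p.2) M :=
    (hf'sm.comp_measurable measurable_snd).aestronglyMeasurable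
  have hcompProd := (Measure.integrable_compProd_iff hf'Msm).1 hf'M
  have hint_ρ : ∀ᵐ v ∂ρ, Integrable f' (ξ b v) := hcompProd.1
  have hnorm_ρ : Integrable (fun v ↦ ∫ y, ‖f' y‖ ∂(ξ b v)) ρ := hcompProd.2
  have hff'M : ∀ᵐ p ∂M, f p.2 = f' p.2 := by
    rw [hμν] at hff'
    exact ae_of_ae_map measurable_snd.aemeasurable hff'
  have hff'ρ : ∀ᵐ v ∂ρ, ∀ᵐ y ∂(ξ b v), f y = f' y := Measure.ae_ae_of_ae_compProd hff'M
  have hint_ρ' : ∀ᵐ v ∂ρ, Integrable f (ξ b v) := by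
    filter_upwards [hint_ρ, hff'ρ] with v h1 h2
    exact h1.congr (Filter.EventuallyEq.symm h2)
  have hA : ∀ᵐ x ∂μ, Integrable f (ξ b (frestrictLe b x)) := by
    rw [← hρ] at hint_ρ'
    exact ae_of_ae_map hπb.aemeasurable hint_ρ'
  -- the candidate conditional expectation
  set G := fun v ↦ ∫ y, f' y ∂(ξ b v) with hGdef
  have hGsm : StronglyMeasurable G :=
    MeasureTheory.StronglyMeasurable.integral_kernel_prod_right (κ := ξ b)
      (f := fun _ y ↦ f' y) (hf'sm.comp_measurable measurable_snd)
  have hGρ : Integrable G ρ := by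
    refine hnorm_ρ.mono' hGsm.aestronglyMeasurable ?_
    exact Eventually.of_forall fun v ↦ norm_integral_le_integral_norm _
  have hgμ : Integrable (fun x ↦ G (frestrictLe b x)) μ := by
    rw [← hρ] at hGρ
    exact (integrable_map_measure hGsm.aestronglyMeasurable hπb.aemeasurable).1 hGρ
  have hm : MeasurableSpace.comap (frestrictLe (π := X) b) MeasurableSpace.pi
      ≤ MeasurableSpace.pi := hπb.comap_le
  have hπm : @Measurable _ _
      (MeasurableSpace.comap (frestrictLe (π := X) b) MeasurableSpace.pi) _
      (frestrictLe (π := X) b) := Measurable.of_comap_le le_rfl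
  have hgm : AEStronglyMeasurable[
      (MeasurableSpace.comap (frestrictLe (π := X) b) MeasurableSpace.pi)]
      (fun x ↦ G (frestrictLe b x)) μ :=
    (hGsm.comp_measurable hπm).aestronglyMeasurable
  have hg_eq : ∀ s : Set (Π n, X n),
      MeasurableSet[MeasurableSpace.comap (frestrictLe (π := X) b) MeasurableSpace.pi] s →
      μ s < ∞ →
      ∫ x in s, G (frestrictLe b x) ∂μ = ∫ x in s, f x ∂μ := by
    rintro s ⟨S, hS, rfl⟩ -
    have hsmeas : MeasurableSet (frestrictLe (π := X) b ⁻¹' S) := hπb hS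
    have h_ae : (Prod.snd ⁻¹' (frestrictLe (π := X) b ⁻¹' S)
        : Set ((Π i : Finset.Iic b, X i) × (Π n, X n))) =ᵐ[M] S ×ˢ Set.univ := by
      rw [Filter.eventuallyEq_set]
      refine Measure.ae_compProd_of_ae_ae ?_ ?_
      · have heq : {q : (Π i : Finset.Iic b, X i) × (Π n, X n) |
            q ∈ Prod.snd ⁻¹' (frestrictLe (π := X) b ⁻¹' S) ↔ q ∈ S ×ˢ Set.univ}
            = (Prod.snd ⁻¹' (frestrictLe (π := X) b ⁻¹' S) ∩ S ×ˢ Set.univ)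
              ∪ ((Prod.snd ⁻¹' (frestrictLe (π := X) b ⁻¹' S))ᶜ ∩ (S ×ˢ Set.univ)ᶜ) := by
          ext q
          simp only [Set.mem_setOf_eq, Set.mem_preimage, Set.mem_prod, Set.mem_univ,
            and_true, Set.mem_union, Set.mem_inter_iff, Set.mem_compl_iff]
          tauto
        rw [heq]
        exact ((measurable_snd hsmeas).inter (hS.prod MeasurableSet.univ)).union
          ((measurable_snd hsmeas).compl.inter (hS.prod MeasurableSet.univ).compl)
      · refine Eventually.of_forall fun v ↦ ?_
        by_cases hv : v ∈ S
        · have h0 : (ξ b v) (frestrictLe b ⁻¹' Sᶜ) = 0 := by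
            rw [traj_restrict κ ξ hchar b v hS.compl, Measure.dirac_apply' _ hS.compl]
            simp [hv]
          filter_upwards [measure_eq_zero_iff_ae_notMem.1 h0] with y hy
          simp only [Set.mem_preimage, Set.mem_compl_iff] at hy
          simp [Set.mem_prod, hv, not_not.1 hy]
        · have h0 : (ξ b v) (frestrictLe b ⁻¹' S) = 0 := by
            rw [traj_restrict κ ξ hchar b v hS, Measure.dirac_apply' _ hS]
            simp [hv]
          filter_upwards [measure_eq_zero_iff_ae_notMem.1 h0] with y hy
          simp only [Set.mem_preimage] at hy
          simp [Set.mem_prod, hv, hy]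
    calc ∫ x in frestrictLe b ⁻¹' S, G (frestrictLe b x) ∂μ
        = ∫ v in S, G v ∂ρ := by
          rw [← hρ, setIntegral_map hS hGsm.aestronglyMeasurable hπb.aemeasurable]
      _ = ∫ v in S, ∫ y in Set.univ, f' y ∂(ξ b v) ∂ρ := by simp [G]
      _ = ∫ p in S ×ˢ Set.univ, f' p.2 ∂M :=
          (Measure.setIntegral_compProd hS MeasurableSet.univ hf'M.integrableOn).symm
      _ = ∫ p in Prod.snd ⁻¹' (frestrictLe b ⁻¹' S), f' p.2 ∂M :=
          (setIntegral_congr_set h_ae).symm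
      _ = ∫ x in frestrictLe b ⁻¹' S, f' x ∂(M.map Prod.snd) :=
          (setIntegral_map hsmeas hf'sm.aestronglyMeasurable
            measurable_snd.aemeasurable).symm
      _ = ∫ x in frestrictLe b ⁻¹' S, f' x ∂μ := by rw [← hμν]
      _ = ∫ x in frestrictLe b ⁻¹' S, f x ∂μ :=
          setIntegral_congr_ae hsmeas (hff'.symm.mono fun x h _ ↦ h)
  have hcond : (fun x ↦ G (frestrictLe b x))
      =ᵐ[μ] μ[f|MeasurableSpace.comap (frestrictLe (π := X) b) MeasurableSpace.pi] :=
    ae_eq_condExp_of_forall_setIntegral_eq hm hf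
      (fun s _ _ ↦ hgμ.integrableOn) hg_eq hgm
  have hGf : ∀ᵐ x ∂μ, G (frestrictLe b x) = ∫ y, f y ∂(ξ b (frestrictLe b x)) := by
    have h1 : ∀ᵐ v ∂ρ, G v = ∫ y, f y ∂(ξ b v) := by
      filter_upwards [hff'ρ] with v h
      exact (integral_congr_ae h).symm
    rw [← hρ] at h1
    exact ae_of_ae_map hπb.aemeasurable h1
  refine ⟨hA, ?_⟩
  filter_upwards [hcond, hGf] with x h1 h2
  rw [← h1, h2]
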